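/- Let f_1, …, f_B : ℝ^d → ℝ be differentiable functions, each convex and (𝓛0,𝓛1)-smooth, all attaining their minimum at a common point x*. Then for every x ∈ ℝ^d, the averaged gradient g := (1/B)Σ_{i=1}^B ∇f_i(x) satisfies ‖g‖² ≤ 2(𝓛0 + 𝓛1‖g‖)·⟨g, x − x*⟩. -/

import Mathlib

open scoped RealInnerProductSpace

noncomputable section

/-- Scalar tangent-line inequality for `t ↦ t² / (2(L0 + L1 t))`. -/
theorem tangent_line_aux (L0 L1 a s : ℝ) (hA : 0 < L0 + L1 * a) (hS : 0 < L0 + L1 * s) :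
    a ^ 2 / (2 * (L0 + L1 * a)) +
      a * (2 * L0 + L1 * a) / (2 * (L0 + L1 * a) ^ 2) * (s - a)
      ≤ s ^ 2 / (2 * (L0 + L1 * s)) := by
  have h1 : (L0 + L1 * a) ≠ 0 := hA.ne'
  have h2 : (L0 + L1 * s) ≠ 0 := hS.ne'
  have hid : s ^ 2 / (2 * (L0 + L1 * s)) -
      (a ^ 2 / (2 * (L0 + L1 * a)) +
        a * (2 * L0 + L1 * a) / (2 * (L0 + L1 * a) ^ 2) * (s - a))
      = L0 ^ 2 * (s - a) ^ 2 / (2 * (L0 + L1 * a) ^ 2 * (L0 + L1 * s)) := by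
    rw [div_mul_eq_mul_div, div_add_div _ _ (by positivity) (by positivity), div_sub_div _ _ (by positivity) (by positivity), div_eq_div_iff (by positivity) (by positivity)]
    ring
  have hnn : 0 ≤ L0 ^ 2 * (s - a) ^ 2 / (2 * (L0 + L1 * a) ^ 2 * (L0 + L1 * s)) := by
    positivity
  linarith

/-- If `f_1, …, f_B` are differentiable, convex and
`(𝓛0,𝓛1)`-smooth with a common minimizer `x*`, then the averaged gradient
`g = (1/B) Σ ∇f_i(x)` satisfies `‖g‖² ≤ 2(𝓛0 + 𝓛1‖g‖)⟨g, x - x*⟩`. -/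
theorem avg_grad_self_bounding
    {d B : ℕ} (L0 L1 : ℝ)
    (f : Fin B → EuclideanSpace ℝ (Fin d) → ℝ)
    (g : Fin B → EuclideanSpace ℝ (Fin d) → EuclideanSpace ℝ (Fin d))
    (xstar : EuclideanSpace ℝ (Fin d))
    (hL0 : 0 ≤ L0) (hL1 : 0 ≤ L1)
    (hgrad : ∀ i y, HasGradientAt (f i) (g i y) y)
    -- each `f i` is convex
    (hconvex : ∀ i (y z : EuclideanSpace ℝ (Fin d)),
      f i y + ⟪g i y, z - y⟫ ≤ f i z)
    -- each `f i` is `(𝓛0,𝓛1)`-smooth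
    (hsmooth : ∀ i (y z : EuclideanSpace ℝ (Fin d)), L1 * ‖y - z‖ ≤ 1 →
      f i y ≤ f i z + ⟪g i z, y - z⟫ + (L0 + L1 * ‖g i z‖) / 2 * ‖y - z‖ ^ 2)
    -- common minimizer (interpolation)
    (hmin : ∀ i y, f i xstar ≤ f i y) :
    ∀ x : EuclideanSpace ℝ (Fin d),
      ‖(B : ℝ)⁻¹ • ∑ i, g i x‖ ^ 2 ≤
        2 * (L0 + L1 * ‖(B : ℝ)⁻¹ • ∑ i, g i x‖) *
          ⟪(B : ℝ)⁻¹ • ∑ i, g i x, x - xstar⟫ := by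
  intro x
  by_cases hB : B = 0
  · subst hB
    simp
  have hBpos : 0 < (B : ℝ) := by
    exact_mod_cast Nat.pos_of_ne_zero hB
  set G : EuclideanSpace ℝ (Fin d) := (B : ℝ)⁻¹ • ∑ i, g i x with hGdef
  clear_value G
  by_cases hG0 : G = 0
  · rw [hG0]; simp
  set a : ℝ := ‖G‖ with hadef
  clear_value a
  have ha : 0 < a := by rw [hadef]; exact norm_pos_iff.mpr hG0
  -- the degenerate case L0 = L1 = 0 : all gradients vanish
  by_cases hL00 : L0 = 0 ∧ L1 = 0
  · exfalso
    apply hG0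
    have hz : ∀ i, g i x = 0 := by
      intro i
      by_contra hne
      have hs : 0 < ‖g i x‖ := norm_pos_iff.mpr hne
      set t : ℝ := (f i x - f i xstar + 1) / ‖g i x‖ ^ 2 with htdef
      have hsm := hsmooth i (x - t • g i x) x (by rw [hL00.2]; norm_num)
      have hmin' := hmin i (x - t • g i x)
      have h1 : ⟪g i x, (x - t • g i x) - x⟫ = -(t * ‖g i x‖ ^ 2) := by
        have he : (x - t • g i x) - x = -(t • g i x) := by abel
        rw [he, inner_neg_right, real_inner_smul_right, real_inner_self_eq_norm_sq]
      have h2 : t * ‖g i x‖ ^ 2 = f i x - f i xstar + 1 := by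
        rw [htdef]
        field_simp
      rw [h1, hL00.1, hL00.2] at hsm
      simp only [zero_mul, zero_add, mul_zero, add_zero] at hsm
      norm_num at hsm
      linarith
    rw [hGdef]
    simp [hz]
  have hA : 0 < L0 + L1 * a := by
    rcases hL0.lt_or_eq with h | h
    · nlinarith [mul_nonneg hL1 ha.le]
    · rcases hL1.lt_or_eq with h1 | h1
      · nlinarith
      · exact absurd ⟨h.symm, h1.symm⟩ hL00
  set A : ℝ := L0 + L1 * a with hAdef
  clear_value A
  set c : ℝ := a * (2 * L0 + L1 * a) / (2 * A ^ 2) with hcdef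
  clear_value c
  have hc : 0 ≤ c := by
    rw [hcdef]
    have := ha.le
    positivity
  -- per-function descent bound
  have key : ∀ i, ‖g i x‖ ^ 2 / (2 * (L0 + L1 * ‖g i x‖)) ≤ f i x - f i xstar := by
    intro i
    have hs0 : (0:ℝ) ≤ ‖g i x‖ := norm_nonneg _
    rcases (show (0:ℝ) ≤ L0 + L1 * ‖g i x‖ by positivity).lt_or_eq with hS | hS
    · set t : ℝ := (L0 + L1 * ‖g i x‖)⁻¹ with htdef
      have ht : 0 < t := inv_pos.mpr hS
      have he : (x - t • g i x) - x = -(t • g i x) := by abel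
      have hcond : L1 * ‖(x - t • g i x) - x‖ ≤ 1 := by
        rw [he, norm_neg, norm_smul, Real.norm_of_nonneg ht.le]
        have h1 : t * (L0 + L1 * ‖g i x‖) = 1 := inv_mul_cancel₀ hS.ne'
        nlinarith [mul_nonneg ht.le hL0]
      have hsm := hsmooth i (x - t • g i x) x hcond
      have hmin' := hmin i (x - t • g i x)
      have h1 : ⟪g i x, (x - t • g i x) - x⟫ = -(t * ‖g i x‖ ^ 2) := by
        rw [he, inner_neg_right, real_inner_smul_right, real_inner_self_eq_norm_sq]
      have h2 : ‖(x - t • g i x) - x‖ ^ 2 = t ^ 2 * ‖g i x‖ ^ 2 := by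
        rw [he, norm_neg, norm_smul, Real.norm_of_nonneg ht.le, mul_pow]
      rw [h1, h2] at hsm
      have heq : t * ‖g i x‖ ^ 2 - (L0 + L1 * ‖g i x‖) / 2 * (t ^ 2 * ‖g i x‖ ^ 2)
          = ‖g i x‖ ^ 2 / (2 * (L0 + L1 * ‖g i x‖)) := by
        rw [htdef]
        field_simp
        ring
      linarith
    · -- L0 + L1‖g i x‖ = 0 : then denominator is 0 and LHS = 0
      rw [← hS]
      norm_num
      linarith [hmin i x]
  -- tangent-line lower bound on the per-function gain
  have tangent : ∀ i, a ^ 2 / (2 * A) + c * (‖g i x‖ - a)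
      ≤ ‖g i x‖ ^ 2 / (2 * (L0 + L1 * ‖g i x‖)) := by
    intro i
    set s : ℝ := ‖g i x‖ with hsdef
    have hs0 : (0:ℝ) ≤ s := norm_nonneg _
    rcases (show (0:ℝ) ≤ L0 + L1 * s by positivity).lt_or_eq with hS | hS
    · have hA' : 0 < L0 + L1 * a := by rw [← hAdef]; exact hA
      have := tangent_line_aux L0 L1 a s hA' hS
      rw [hcdef, hAdef]
      exact this
    · -- here L0 = 0 and s = 0 (since L1 > 0 necessarily)
      have hL0z : L0 = 0 := by nlinarith [mul_nonneg hL1 hs0]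
      have hL1pos : 0 < L1 := by
        rcases hL1.lt_or_eq with h | h
        · exact h
        · exfalso
          have hAz : A = 0 := by rw [hAdef, hL0z, ← h]; ring
          rw [hAz] at hA
          exact lt_irrefl 0 hA
      have hsz : s = 0 := by
        have hls : L1 * s = 0 := by linarith
        rcases mul_eq_zero.mp hls with h' | h'
        · exact absurd h' hL1pos.ne'
        · exact h'
      rw [← hS, hsz]
      norm_num
      have : a ^ 2 / (2 * A) + c * (0 - a) = 0 := by
        rw [hcdef, hAdef, hL0z]
        field_simp
        ring
      linarith
  -- sum everything up
  have h3 : (B : ℝ) * a ≤ ∑ i, ‖g i x‖ := by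
    have h4 : ‖∑ i, g i x‖ ≤ ∑ i, ‖g i x‖ := norm_sum_le _ _
    have hnorm : a = (B : ℝ)⁻¹ * ‖∑ i, g i x‖ := by
      rw [hadef, hGdef, norm_smul, Real.norm_of_nonneg (inv_nonneg.mpr hBpos.le)]
    rw [hnorm]
    rw [mul_inv_cancel_left₀ hBpos.ne']
    exact h4
  have hsum : ∑ i, (a ^ 2 / (2 * A) + c * (‖g i x‖ - a)) ≤ ∑ i, (f i x - f i xstar) :=
    Finset.sum_le_sum fun i _ => le_trans (tangent i) (key i)
  have hsum2 : (B : ℝ) * (a ^ 2 / (2 * A)) ≤ ∑ i, (f i x - f i xstar) := by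
    have hlhs : ∑ i, (a ^ 2 / (2 * A) + c * (‖g i x‖ - a))
        = (B : ℝ) * (a ^ 2 / (2 * A)) + c * ((∑ i, ‖g i x‖) - (B : ℝ) * a) := by
      rw [Finset.sum_add_distrib, Finset.sum_const, Finset.card_univ, Fintype.card_fin,
        nsmul_eq_mul, ← Finset.mul_sum, Finset.sum_sub_distrib, Finset.sum_const,
        Finset.card_univ, Fintype.card_fin, nsmul_eq_mul]
    rw [hlhs] at hsum
    have hnn := mul_nonneg hc (sub_nonneg.mpr h3)
    linarith
  have hconv : ∑ i, (f i x - f i xstar) ≤ ∑ i, ⟪g i x, x - xstar⟫ := by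
    refine Finset.sum_le_sum fun i _ => ?_
    have h := hconvex i x xstar
    have hinner : ⟪g i x, xstar - x⟫ = -⟪g i x, x - xstar⟫ := by
      rw [← inner_neg_right]
      congr 1
      abel
    rw [hinner] at h
    linarith
  have hip : ⟪G, x - xstar⟫ = (B : ℝ)⁻¹ * ∑ i, ⟪g i x, x - xstar⟫ := by
    rw [hGdef, real_inner_smul_left, sum_inner]
  have hfin : a ^ 2 / (2 * A) ≤ ⟪G, x - xstar⟫ := by
    rw [hip]
    rw [inv_mul_eq_div, le_div_iff₀ hBpos]
    calc a ^ 2 / (2 * A) * (B : ℝ) = (B : ℝ) * (a ^ 2 / (2 * A)) := by ring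
      _ ≤ ∑ i, (f i x - f i xstar) := hsum2
      _ ≤ ∑ i, ⟪g i x, x - xstar⟫ := hconv
  have hfinal : a ^ 2 = 2 * A * (a ^ 2 / (2 * A)) := by
    field_simp
  calc a ^ 2 = 2 * A * (a ^ 2 / (2 * A)) := hfinal
    _ ≤ 2 * A * ⟪G, x - xstar⟫ := by
        apply mul_le_mul_of_nonneg_left hfin
        positivity

end
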